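/- Let T be a positivity-preserving bounded linear operator on L²(Q,μ), and let f = Σᵢ αᵢ χ_{Aᵢ}, g = Σᵢ βᵢ χ_{Aᵢ} be nonnegative simple functions with αᵢ, βᵢ ≥ 0 and pairwise disjoint measurable sets Aᵢ of finite measure. Then pointwise a.e., (Tf)² + (Tg)² ≤ (T(f²+g²)^{1/2})², where (f²+g²)^{1/2} = Σᵢ (αᵢ²+βᵢ²)^{1/2} χ_{Aᵢ}. -/

import Mathlib

open MeasureTheory Filter Topology

private lemma coeFn_sum_ae {Q : Type*} [MeasurableSpace Q] {μ : Measure Q}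
    {n : ℕ} (v : Fin n → Lp ℝ 2 μ) :
    (↑↑(∑ i, v i) : Q → ℝ) =ᵐ[μ] fun q => ∑ i, (v i : Q → ℝ) q := by
  induction (Finset.univ : Finset (Fin n)) using Finset.induction_on with
  | empty => simp only [Finset.sum_empty]; exact Lp.coeFn_zero ℝ 2 μ
  | insert _ _ hx ih =>
    rename_i a s
    rw [Finset.sum_insert hx]
    filter_upwards [Lp.coeFn_add (v a) (∑ i ∈ s, v i), ih] with q h1 h2
    rw [h1, Finset.sum_insert hx, Pi.add_apply, h2]

private lemma key_ineq {n : ℕ} (α β a : Fin n → ℝ) (ha : ∀ i, 0 ≤ a i) :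
    (∑ i, α i * a i) ^ 2 + (∑ i, β i * a i) ^ 2 ≤
      (∑ i, Real.sqrt (α i ^ 2 + β i ^ 2) * a i) ^ 2 := by
  set z : ℂ := ∑ i, (a i : ℂ) * ⟨α i, β i⟩ with hz
  have hre : z.re = ∑ i, α i * a i := by
    simp [hz, Complex.re_sum, Complex.mul_re, mul_comm]
  have him : z.im = ∑ i, β i * a i := by
    simp [hz, Complex.im_sum, Complex.mul_im, mul_comm]
  have h1 : ‖z‖ ≤ ∑ i, Real.sqrt (α i ^ 2 + β i ^ 2) * a i := by
    refine le_trans (norm_sum_le _ _) (le_of_eq (Finset.sum_congr rfl fun i _ => ?_))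
    rw [norm_mul, Complex.norm_of_nonneg (ha i), Complex.norm_def,
      Complex.normSq_mk, mul_comm]
    ring_nf
  have h2 : ‖z‖ ^ 2 = (∑ i, α i * a i) ^ 2 + (∑ i, β i * a i) ^ 2 := by
    rw [Complex.sq_norm, Complex.normSq_apply, hre, him]; ring
  rw [← h2]
  exact pow_le_pow_left₀ (norm_nonneg z) h1 2

theorem stmt1 {Q : Type*} [MeasurableSpace Q] (μ : Measure Q) [SigmaFinite μ]
    (T : Lp ℝ 2 μ →L[ℝ] Lp ℝ 2 μ)
    (hT : ∀ u : Lp ℝ 2 μ, 0 ≤ u → 0 ≤ T u)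
    (n : ℕ) (α β : Fin n → ℝ) (hα : ∀ i, 0 ≤ α i) (hβ : ∀ i, 0 ≤ β i)
    (A : Fin n → Set Q) (hAmeas : ∀ i, MeasurableSet (A i))
    (hAfin : ∀ i, μ (A i) < ⊤)
    (hAdisj : Pairwise (Function.onFun Disjoint A))
    (f g h : Lp ℝ 2 μ)
    (hf : (f : Q → ℝ) =ᵐ[μ] fun q => ∑ i, Set.indicator (A i) (fun _ => α i) q)
    (hg : (g : Q → ℝ) =ᵐ[μ] fun q => ∑ i, Set.indicator (A i) (fun _ => β i) q)
    (hh : (h : Q → ℝ) =ᵐ[μ]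
      fun q => ∑ i, Set.indicator (A i) (fun _ => Real.sqrt (α i ^ 2 + β i ^ 2)) q) :
    ∀ᵐ q ∂μ, ((T f : Q → ℝ) q) ^ 2 + ((T g : Q → ℝ) q) ^ 2 ≤ ((T h : Q → ℝ) q) ^ 2 := by
  classical
  set u : Fin n → Lp ℝ 2 μ :=
    fun i => indicatorConstLp 2 (hAmeas i) (hAfin i).ne (1 : ℝ) with hu
  have hcoe : ∀ i, (u i : Q → ℝ) =ᵐ[μ] (A i).indicator fun _ => (1 : ℝ) :=
    fun i => indicatorConstLp_coeFn
  have rep : ∀ (c : Fin n → ℝ) (w : Lp ℝ 2 μ),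
      ((w : Q → ℝ) =ᵐ[μ] fun q => ∑ i, Set.indicator (A i) (fun _ => c i) q) →
      (↑↑(T w) : Q → ℝ) =ᵐ[μ] fun q => ∑ i, c i * ((T (u i) : Q → ℝ) q) := by
    intro c w hw
    have hwe : w = ∑ i, c i • u i := by
      refine Lp.ext ?_
      filter_upwards [hw, coeFn_sum_ae (fun i => c i • u i),
        Filter.eventually_all.2 (fun i => Lp.coeFn_smul (c i) (u i)),
        Filter.eventually_all.2 hcoe] with q h1 h2 h3 h4
      rw [h1, h2]
      refine Finset.sum_congr rfl fun i _ => ?_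
      rw [h3 i, Pi.smul_apply, h4 i, smul_eq_mul]
      by_cases hq : q ∈ A i <;> simp [Set.indicator_apply, hq]
    have hTw : T w = ∑ i, c i • T (u i) := by
      rw [hwe, map_sum]
      exact Finset.sum_congr rfl fun i _ => T.map_smul (c i) (u i)
    rw [hTw]
    filter_upwards [coeFn_sum_ae (fun i => c i • T (u i)),
      Filter.eventually_all.2 (fun i => Lp.coeFn_smul (c i) (T (u i)))] with q h1 h2
    rw [h1]
    exact Finset.sum_congr rfl fun i _ => by rw [h2 i, Pi.smul_apply, smul_eq_mul]
  have hpos : ∀ i, ∀ᵐ q ∂μ, 0 ≤ ((T (u i) : Q → ℝ) q) := by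
    intro i
    refine (Lp.coeFn_nonneg _).2 (hT (u i) ?_)
    refine (Lp.coeFn_nonneg _).1 ?_
    filter_upwards [hcoe i] with q hq
    rw [Pi.zero_apply, hq]
    exact Set.indicator_nonneg (fun _ _ => zero_le_one) q
  filter_upwards [rep α f hf, rep β g hg, rep _ h hh,
    Filter.eventually_all.2 hpos] with q h1 h2 h3 h4
  rw [h1, h2, h3]
  exact key_ineq α β _ h4
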